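/- Let Λ be a finite dimensional algebra, P a simple projective non-injective Λ-module, and 0 → P → E → τ⁻P → 0 the almost split (Auslander–Reiten) sequence starting at P. Then the middle term E is a projective Λ-module; more precisely, E is a direct sum of the indecomposable projectives P_{e(a)} indexed by the arrows a of the quiver of Λ starting at the source vertex corresponding to P. -/

import Mathlib

open CategoryTheory

section ModulePreamble

variable (Λ : Type) [Ring Λ]

/-- `P` is (isomorphic to) a direct summand of `X`. -/
def IsSummandOf (P X : Type) [AddCommGroup P] [Module Λ P] [AddCommGroup X] [Module Λ X] :
    Prop :=
  ∃ (s : P →ₗ[Λ] X) (r : X →ₗ[Λ] P), r.comp s = LinearMap.id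

/-- `X` belongs to `add T`: `X` is a direct summand of a finite direct sum of copies of `T`. -/
def InAdd (X T : Type) [AddCommGroup X] [Module Λ X] [AddCommGroup T] [Module Λ T] : Prop :=
  ∃ (n : ℕ) (s : X →ₗ[Λ] (Fin n → T)) (r : (Fin n → T) →ₗ[Λ] X), r.comp s = LinearMap.id

/-- `h` lies in the radical `rad_Λ(X, Y)` of the module category: for every `g : Y → X`
    the endomorphism `1 - g∘h` of `X` is invertible.  (Equivalently, no component of `h`
    between indecomposable direct summands is an isomorphism.) -/
def IsRadHom (X Y : Type) [AddCommGroup X] [Module Λ X] [AddCommGroup Y] [Module Λ Y]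
    (h : X →ₗ[Λ] Y) : Prop :=
  ∀ g : Y →ₗ[Λ] X, IsUnit ((1 : Module.End Λ X) - (g.comp h : Module.End Λ X))

/-- An almost split (Auslander–Reiten) sequence `0 → A → B → C → 0`. -/
structure AlmostSplitSequence (A B C : Type) [AddCommGroup A] [Module Λ A]
    [AddCommGroup B] [Module Λ B] [AddCommGroup C] [Module Λ C] where
  f : A →ₗ[Λ] B
  g : B →ₗ[Λ] C
  inj : Function.Injective f
  surj : Function.Surjective g
  exact : LinearMap.range f = LinearMap.ker g
  nonSplit : ¬ ∃ r : B →ₗ[Λ] A, r.comp f = LinearMap.id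
  leftAlmostSplit : ∀ (X : Type) [AddCommGroup X] [Module Λ X] (u : A →ₗ[Λ] X),
    (¬ ∃ r : X →ₗ[Λ] A, r.comp u = LinearMap.id) → ∃ v : B →ₗ[Λ] X, v.comp f = u
  rightAlmostSplit : ∀ (X : Type) [AddCommGroup X] [Module Λ X] (u : X →ₗ[Λ] C),
    (¬ ∃ s : C →ₗ[Λ] X, u.comp s = LinearMap.id) → ∃ v : X →ₗ[Λ] B, g.comp v = u
  fMinimal : ∀ h : B →ₗ[Λ] B, h.comp f = f → Function.Bijective h
  gMinimal : ∀ h : B →ₗ[Λ] B, g.comp h = g → Function.Bijective h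

/-- The module `M` has projective dimension at most 1: it admits a projective
    presentation `0 → P¹ → P⁰ → M → 0`. -/
def ProjDimLE1 (M : Type) [AddCommGroup M] [Module Λ M] : Prop :=
  ∃ (P0 P1 : ModuleCat Λ) (d : P1 ⟶ P0) (e : P0 ⟶ ModuleCat.of Λ M),
    Module.Projective Λ P0 ∧ Module.Projective Λ P1 ∧
    Function.Injective d ∧ Function.Surjective e ∧
    LinearMap.range d.hom = LinearMap.ker e.hom

/-- The module `M` has projective dimension at most 2: it admits a projective resolution
    `0 → P² → P¹ → P⁰ → M → 0`. -/
def ProjDimLE2 (M : Type) [AddCommGroup M] [Module Λ M] : Prop :=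
  ∃ (P0 P1 P2 : ModuleCat Λ) (d2 : P2 ⟶ P1) (d1 : P1 ⟶ P0) (e : P0 ⟶ ModuleCat.of Λ M),
    Module.Projective Λ P0 ∧ Module.Projective Λ P1 ∧ Module.Projective Λ P2 ∧
    Function.Injective d2 ∧ Function.Surjective e ∧
    LinearMap.range d2.hom = LinearMap.ker d1.hom ∧ LinearMap.range d1.hom = LinearMap.ker e.hom

/-- The ring `Λ` has global dimension at most 2. -/
def GlobalDimLE2 : Prop := ∀ M : ModuleCat Λ, ProjDimLE2 Λ M

end ModulePreamble

/-- Let `Λ` be a finite dimensional algebra, `P` a simple projective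
    non-injective `Λ`-module and `0 → P → E → τ⁻P → 0` the almost split sequence starting
    at `P`.  Then the middle term `E` is a projective `Λ`-module (it is the direct sum of the
    indecomposable projectives at the targets of the arrows starting at the source vertex
    corresponding to `P`). -/
theorem middle_term_of_AR_sequence_starting_at_simple_projective_is_projective
    (K : Type) [Field K] (Λ : Type) [Ring Λ] [Algebra K Λ] [FiniteDimensional K Λ]
    (P E N : Type) [AddCommGroup P] [Module Λ P] [AddCommGroup E] [Module Λ E]
    [AddCommGroup N] [Module Λ N]
    [Module.Finite Λ P] [Module.Finite Λ E] [Module.Finite Λ N]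
    (hsimple : IsSimpleModule Λ P) (hproj : Module.Projective Λ P)
    (hninj : ¬ Module.Injective Λ P)
    (S : AlmostSplitSequence Λ P E N) :
    Module.Projective Λ E := by
  classical
  obtain ⟨n, h₀, hsurj⟩ := Module.Finite.exists_fin' Λ E
  have hart : IsArtinian Λ (Fin n → Λ) := isArtinian_of_tower K inferInstance
  have wf : WellFounded ((· < ·) : Submodule Λ (Fin n → Λ) → Submodule Λ (Fin n → Λ) → Prop) :=
    (isArtinian_iff _ _).mp hart
  suffices hQ : ∀ G : Submodule Λ (Fin n → Λ), Submodule.map h₀ G = ⊤ →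
      ∃ s : E →ₗ[Λ] (Fin n → Λ), h₀.comp s = LinearMap.id by
    obtain ⟨s, hs⟩ := hQ ⊤ (by rw [Submodule.map_top]; exact LinearMap.range_eq_top.mpr hsurj)
    exact Module.Projective.of_split s h₀ hs
  intro G
  refine wf.induction
    (C := fun G => Submodule.map h₀ G = ⊤ →
      ∃ s : E →ₗ[Λ] (Fin n → Λ), h₀.comp s = LinearMap.id) G ?_
  clear G
  intro G IH hG
  set h : ↥G →ₗ[Λ] E := h₀.comp G.subtype with hh
  have hsurjG : Function.Surjective h := by
    intro x
    have hx : x ∈ Submodule.map h₀ G := hG ▸ Submodule.mem_top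
    obtain ⟨y, hy, hxy⟩ := hx
    exact ⟨⟨y, hy⟩, hxy⟩
  obtain ⟨f', hf'⟩ := Module.projective_lifting_property h S.f hsurjG
  by_cases hsplit : ∃ r : ↥G →ₗ[Λ] P, r.comp f' = LinearMap.id
  · -- the lift of f is a split mono
    obtain ⟨r, hr⟩ := hsplit
    have hr' : ∀ a : P, r (f' a) = a := fun a => DFunLike.congr_fun hr a
    -- key decomposition: every x : E is f a + (element of h(ker r))
    have key : ∀ x : E, ∃ a : P, x - S.f a ∈ Submodule.map h (LinearMap.ker r) := by
      intro x
      obtain ⟨z, hz⟩ := hsurjG x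
      refine ⟨r z, ⟨z - f' (r z), ?_, ?_⟩⟩
      · simp [LinearMap.mem_ker, map_sub, hr']
      · have : h (f' (r z)) = S.f (r z) := DFunLike.congr_fun hf' (r z)
        rw [map_sub, hz, this]
    by_cases hfM : LinearMap.range S.f ≤ Submodule.map h (LinearMap.ker r)
    · -- recurse on the strictly smaller submodule G'
      have hle : Submodule.map G.subtype (LinearMap.ker r) ≤ G := by
        intro x hx
        obtain ⟨y, _, hyx⟩ := hx
        exact hyx ▸ y.2
      have hne : Submodule.map G.subtype (LinearMap.ker r) ≠ G := by
        intro hEq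
        have : Nontrivial P := IsSimpleModule.nontrivial Λ P
        obtain ⟨p, hp⟩ := exists_ne (0 : P)
        have hmem : ((f' p : ↥G) : Fin n → Λ) ∈ Submodule.map G.subtype (LinearMap.ker r) := by
          rw [hEq]; exact (f' p).2
        obtain ⟨y, hy, hyx⟩ := hmem
        have hyf : y = f' p := Subtype.ext hyx
        have h0 : r (f' p) = 0 := by rw [← hyf]; exact hy
        rw [hr'] at h0
        exact hp h0
      have hmap : Submodule.map h₀ (Submodule.map G.subtype (LinearMap.ker r)) = ⊤ := by
        have e1 : Submodule.map h₀ (Submodule.map G.subtype (LinearMap.ker r))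
            = Submodule.map h (LinearMap.ker r) := by
          rw [← Submodule.map_comp]
        rw [e1, eq_top_iff]
        intro x _
        obtain ⟨a, ha⟩ := key x
        have hfa : S.f a ∈ Submodule.map h (LinearMap.ker r) := hfM ⟨a, rfl⟩
        simpa using (Submodule.map h (LinearMap.ker r)).add_mem hfa ha
      exact IH _ (lt_of_le_of_ne hle hne) hmap
    · -- simplicity of P forces f to split: contradiction
      exfalso
      have hcomap : Submodule.comap S.f (Submodule.map h (LinearMap.ker r)) = ⊥ := by
        rcases hsimple.1.eq_bot_or_eq_top (Submodule.comap S.f (Submodule.map h (LinearMap.ker r))) with h1 | h1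
        · exact h1
        · exfalso
          apply hfM
          rintro x ⟨a, rfl⟩
          have : a ∈ Submodule.comap S.f (Submodule.map h (LinearMap.ker r)) := by
            rw [h1]; trivial
          exact this
      have hdisj : Disjoint (LinearMap.range S.f) (Submodule.map h (LinearMap.ker r)) := by
        rw [disjoint_iff, eq_bot_iff]
        rintro x ⟨⟨a, rfl⟩, hxM⟩
        have : a ∈ Submodule.comap S.f (Submodule.map h (LinearMap.ker r)) := hxM
        rw [hcomap] at this
        simp only [Submodule.mem_bot] at this
        simp [this]
      have hcodisj : Codisjoint (LinearMap.range S.f) (Submodule.map h (LinearMap.ker r)) := by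
        rw [codisjoint_iff, eq_top_iff]
        intro x _
        obtain ⟨a, ha⟩ := key x
        have hx : x = S.f a + (x - S.f a) := by abel
        rw [hx]
        exact Submodule.add_mem_sup ⟨a, rfl⟩ ha
      have hcompl : IsCompl (LinearMap.range S.f) (Submodule.map h (LinearMap.ker r)) :=
        ⟨hdisj, hcodisj⟩
      set proj := Submodule.linearProjOfIsCompl _ _ hcompl
      set eP := LinearEquiv.ofInjective S.f S.inj
      refine S.nonSplit ⟨(eP.symm.toLinearMap).comp proj, ?_⟩
      ext a
      have h1 : proj (S.f a) = eP a := by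
        have := Submodule.linearProjOfIsCompl_apply_left hcompl (eP a)
        have h2 : ((eP a : E)) = S.f a := by
          simp [eP, LinearEquiv.ofInjective_apply]
        rw [← h2]
        exact this
      simp [LinearMap.comp_apply, h1]
  · -- the lift is not split mono: use the almost split property
    obtain ⟨v, hv⟩ := S.leftAlmostSplit ↥G f' hsplit
    set φ : E →ₗ[Λ] E := h.comp v with hφ
    have hφf : φ.comp S.f = S.f := by
      rw [hφ, LinearMap.comp_assoc, hv, hf']
    have hbij := S.fMinimal φ hφf
    set e := LinearEquiv.ofBijective φ hbij with he
    refine ⟨(G.subtype.comp v).comp e.symm.toLinearMap, ?_⟩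
    ext x
    have h1 : φ (e.symm x) = x := e.apply_symm_apply x
    simpa [LinearMap.comp_apply, hφ, hh] using h1
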